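/- Let X, Y be Banach spaces and u : [0,∞) → L(X;Y). If for every x ∈ X there exists t_x ≥ 0 such that u(t)x = 0 for all t > t_x, then there exists t₀ ≥ 0 such that u(t) = 0 for all t > t₀. -/

import Mathlib

/-- Individually eventually zero implies uniformly eventually zero. -/
theorem eventually_zero_individual_iff_uniform
    {X Y : Type*} [NormedAddCommGroup X] [NormedSpace ℝ X] [CompleteSpace X]
    [NormedAddCommGroup Y] [NormedSpace ℝ Y] [CompleteSpace Y]
    (u : ℝ → X →L[ℝ] Y)
    (h : ∀ x : X, ∃ tx : ℝ, 0 ≤ tx ∧ ∀ t : ℝ, tx < t → u t x = 0) :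
    ∃ t₀ : ℝ, 0 ≤ t₀ ∧ ∀ t : ℝ, t₀ < t → u t = 0 := by
  set S : ℕ → Submodule ℝ X := fun n => ⨅ (t : ℝ) (_ : (n : ℝ) < t), LinearMap.ker (u t : X →ₗ[ℝ] Y)
  have hmem : ∀ n x, x ∈ S n ↔ ∀ t : ℝ, (n : ℝ) < t → u t x = 0 := by
    intro n x
    simp [S, Submodule.mem_iInf, LinearMap.mem_ker]
  have hclosed : ∀ n, IsClosed (S n : Set X) := by
    intro n
    have : (S n : Set X) = ⋂ (t : ℝ) (_ : (n : ℝ) < t), (LinearMap.ker (u t : X →ₗ[ℝ] Y) : Set X) := by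
      ext x; simp [hmem, Set.mem_iInter, LinearMap.mem_ker]
    rw [this]
    exact isClosed_iInter fun t => isClosed_iInter fun _ => ContinuousLinearMap.isClosed_ker (u t)
  have hcover : (⋃ n, (S n : Set X)) = Set.univ := by
    ext x
    simp only [Set.mem_iUnion, Set.mem_univ, iff_true]
    obtain ⟨tx, htx0, htx⟩ := h x
    obtain ⟨n, hn⟩ := exists_nat_ge tx
    exact ⟨n, (hmem n x).2 fun t ht => htx t (lt_of_le_of_lt hn ht)⟩
  obtain ⟨n, hn⟩ := nonempty_interior_of_iUnion_of_closed hclosed hcover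
  have htop : S n = ⊤ := Submodule.eq_top_of_nonempty_interior' _ hn
  refine ⟨n, Nat.cast_nonneg n, fun t ht => ?_⟩
  ext x
  have : x ∈ S n := htop ▸ Submodule.mem_top
  simpa using (hmem n x).1 this t ht
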